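/- If G is a K_{2,3}-saturated graph on n vertices that has a vertex of degree 1, then G has at least 2n − 3 edges. -/

import Mathlib

open SimpleGraph

/-- `G` contains a subgraph isomorphic to the complete bipartite graph `K_{2,3}`. -/
def HasK23 {V : Type*} (G : SimpleGraph V) : Prop :=
  ∃ f : (Fin 2 ⊕ Fin 3) ↪ V,
    ∀ a b, (completeBipartiteGraph (Fin 2) (Fin 3)).Adj a b → G.Adj (f a) (f b)

/-- `G` is `K_{2,3}`-saturated: `K_{2,3}`-free, but adding any edge between two
non-adjacent vertices creates a `K_{2,3}`. -/
def K23Saturated {V : Type*} (G : SimpleGraph V) : Prop :=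
  ¬ HasK23 G ∧ ∀ u v : V, u ≠ v → ¬ G.Adj u v →
    HasK23 (G ⊔ SimpleGraph.fromEdgeSet {s(u, v)})

open Sum in
lemma common_nbrs {n : ℕ} {G : SimpleGraph (Fin n)} (hG : K23Saturated G)
    {v u : Fin n} (hadj : G.Adj v u) (hNv : ∀ x, G.Adj v x → x = u)
    {w : Fin n} (hwu : w ≠ u) (hwv : w ≠ v) :
    ∃ a b, a ≠ b ∧ a ≠ u ∧ a ≠ v ∧ a ≠ w ∧ b ≠ u ∧ b ≠ v ∧ b ≠ w ∧
      G.Adj u a ∧ G.Adj u b ∧ G.Adj w a ∧ G.Adj w b := by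
  classical
  have hvw : v ≠ w := Ne.symm hwv
  have hnadj : ¬ G.Adj v w := fun h => hwu (hNv w h)
  obtain ⟨f, hf⟩ := hG.2 v w hvw hnadj
  have hGof : ∀ x y : Fin n,
      (G ⊔ SimpleGraph.fromEdgeSet {s(v, w)}).Adj x y → x ≠ v → y ≠ v → G.Adj x y := by
    intro x y hxy hxv hyv
    rw [SimpleGraph.sup_adj, SimpleGraph.fromEdgeSet_adj] at hxy
    rcases hxy with h | ⟨hmem, hne⟩
    · exact h
    · rw [Set.mem_singleton_iff, Sym2.eq_iff] at hmem
      rcases hmem with ⟨h1, h2⟩ | ⟨h1, h2⟩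
      · exact absurd h1 hxv
      · exact absurd h2 hyv
  have hvnb : ∀ y, (G ⊔ SimpleGraph.fromEdgeSet {s(v, w)}).Adj v y → y = u ∨ y = w := by
    intro y hy
    rw [SimpleGraph.sup_adj, SimpleGraph.fromEdgeSet_adj] at hy
    rcases hy with h | ⟨hmem, hne⟩
    · exact Or.inl (hNv y h)
    · rw [Set.mem_singleton_iff, Sym2.eq_iff] at hmem
      rcases hmem with ⟨h1, h2⟩ | ⟨h1, h2⟩
      · exact Or.inr h2
      · exact absurd h1 hvw
  have hcb : ∀ (i : Fin 2) (j : Fin 3),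
      (G ⊔ SimpleGraph.fromEdgeSet {s(v, w)}).Adj (f (inl i)) (f (inr j)) := by
    intro i j
    exact hf _ _ (by simp)
  obtain ⟨x, hx⟩ : ∃ x, f x = v := by
    by_contra h
    push_neg at h
    exact hG.1 ⟨f, fun a b hab => hGof _ _ (hf a b hab) (h a) (h b)⟩
  rcases x with i | j
  · exfalso
    have h0 := hvnb _ (by have := hcb i 0; rwa [hx] at this)
    have h1 := hvnb _ (by have := hcb i 1; rwa [hx] at this)
    have h2 := hvnb _ (by have := hcb i 2; rwa [hx] at this)
    rcases h0 with h0 | h0 <;> rcases h1 with h1 | h1 <;> rcases h2 with h2 | h2 <;>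
      first
      | exact absurd (f.injective (h0.trans h1.symm)) (by decide)
      | exact absurd (f.injective (h0.trans h2.symm)) (by decide)
      | exact absurd (f.injective (h1.trans h2.symm)) (by decide)
  · have h0 := hvnb _ (by have := (hcb 0 j).symm; rwa [hx] at this)
    have h1 := hvnb _ (by have := (hcb 1 j).symm; rwa [hx] at this)
    obtain ⟨j₁, j₂, hj12, hj1, hj2⟩ :=
      (by decide : ∀ j : Fin 3, ∃ j₁ j₂ : Fin 3, j₁ ≠ j₂ ∧ j₁ ≠ j ∧ j₂ ≠ j) j
    have hane : f (inr j₁) ≠ v := fun h => hj1 (by simpa using f.injective (h.trans hx.symm))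
    have hbne : f (inr j₂) ≠ v := fun h => hj2 (by simpa using f.injective (h.trans hx.symm))
    have hab : f (inr j₁) ≠ f (inr j₂) := fun h => hj12 (by simpa using f.injective h)
    have ha0 : f (inr j₁) ≠ f (inl 0) := fun h => by simpa using f.injective h
    have ha1 : f (inr j₁) ≠ f (inl 1) := fun h => by simpa using f.injective h
    have hb0 : f (inr j₂) ≠ f (inl 0) := fun h => by simpa using f.injective h
    have hb1 : f (inr j₂) ≠ f (inl 1) := fun h => by simpa using f.injective h
    have hl0v : f (inl 0) ≠ v := fun h => by simpa using f.injective (h.trans hx.symm)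
    have hl1v : f (inl 1) ≠ v := fun h => by simpa using f.injective (h.trans hx.symm)
    have hGa0 : G.Adj (f (inl 0)) (f (inr j₁)) := hGof _ _ (hcb 0 j₁) hl0v hane
    have hGa1 : G.Adj (f (inl 1)) (f (inr j₁)) := hGof _ _ (hcb 1 j₁) hl1v hane
    have hGb0 : G.Adj (f (inl 0)) (f (inr j₂)) := hGof _ _ (hcb 0 j₂) hl0v hbne
    have hGb1 : G.Adj (f (inl 1)) (f (inr j₂)) := hGof _ _ (hcb 1 j₂) hl1v hbne
    have h01 : f (inl 0) ≠ f (inl 1) := fun h => by simpa using f.injective h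
    rcases h0 with h0 | h0 <;> rcases h1 with h1 | h1
    · exact absurd (h0.trans h1.symm) h01
    · subst h0; subst h1
      exact ⟨_, _, hab, ha0, hane, ha1, hb0, hbne, hb1, hGa0, hGb0, hGa1, hGb1⟩
    · subst h0; subst h1
      exact ⟨_, _, hab, ha1, hane, ha0, hb1, hbne, hb0, hGa1, hGb1, hGa0, hGb0⟩
    · exact absurd (h0.trans h1.symm) h01

theorem sat_K23_min_degree_one (n : ℕ) (G : SimpleGraph (Fin n))
    (hG : K23Saturated G) (hdeg : ∃ v, (G.neighborSet v).ncard = 1) :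
    2 * n - 3 ≤ G.edgeSet.ncard := by
  classical
  obtain ⟨v, hv⟩ := hdeg
  obtain ⟨u, hu⟩ := Set.ncard_eq_one.mp hv
  have hadj : G.Adj v u := by
    have : u ∈ G.neighborSet v := by rw [hu]; exact rfl
    exact this
  have hvu : v ≠ u := G.ne_of_adj hadj
  have hNv : ∀ x, G.Adj v x → x = u := by
    intro x hx
    have : x ∈ G.neighborSet v := hx
    rwa [hu, Set.mem_singleton_iff] at this
  have hdv : G.degree v = 1 := by
    have h := hv
    rw [Set.ncard_eq_toFinset_card'] at h
    simpa [SimpleGraph.degree, SimpleGraph.neighborFinset] using h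
  have hedge : G.edgeSet.ncard = G.edgeFinset.card := by
    rw [Set.ncard_eq_toFinset_card']; rfl
  set S : Finset (Fin n) := Finset.univ \ {u, v} with hSdef
  set A : Finset (Fin n) := G.neighborFinset u \ {v} with hAdef
  have hn2 : 2 ≤ n := by
    have h := Finset.card_le_univ ({u, v} : Finset (Fin n))
    rw [Finset.card_pair (Ne.symm hvu)] at h
    simpa using h
  have hScard : S.card = n - 2 := by
    rw [hSdef, Finset.card_sdiff_of_subset (Finset.subset_univ _), Finset.card_pair (Ne.symm hvu),
      Finset.card_univ, Fintype.card_fin]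
  have hAS : A ⊆ S := by
    intro a ha
    rw [hAdef, Finset.mem_sdiff, SimpleGraph.mem_neighborFinset, Finset.mem_singleton] at ha
    rw [hSdef, Finset.mem_sdiff]
    refine ⟨Finset.mem_univ _, ?_⟩
    simp only [Finset.mem_insert, Finset.mem_singleton]
    push_neg
    exact ⟨fun h => G.irrefl (h ▸ ha.1), ha.2⟩
  have hdu1 : 0 < G.degree u := (G.degree_pos_iff_exists_adj u).mpr ⟨v, hadj.symm⟩
  have hAcard : A.card = G.degree u - 1 := by
    rw [hAdef, Finset.card_sdiff_of_subset (Finset.singleton_subset_iff.mpr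
      (by rw [SimpleGraph.mem_neighborFinset]; exact hadj.symm))]
    rw [Finset.card_singleton]
    rfl
  have hkey : ∀ w ∈ S, ∃ a b, a ≠ b ∧ a ∈ A ∩ G.neighborFinset w ∧
      b ∈ A ∩ G.neighborFinset w := by
    intro w hw
    rw [hSdef, Finset.mem_sdiff] at hw
    simp only [Finset.mem_insert, Finset.mem_singleton] at hw
    push_neg at hw
    obtain ⟨a, b, hab, hau, hav, haw, hbu, hbv, hbw, hua, hub, hwa, hwb⟩ :=
      common_nbrs hG hadj hNv hw.2.1 hw.2.2
    refine ⟨a, b, hab, ?_, ?_⟩ <;>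
      simp [hAdef, SimpleGraph.mem_neighborFinset, hua, hub, hav, hbv, hwa, hwb]
  have h2 : ∀ w ∈ S, 2 ≤ (A ∩ G.neighborFinset w).card := by
    intro w hw
    obtain ⟨a, b, hab, ha, hb⟩ := hkey w hw
    exact Finset.one_lt_card.mpr ⟨a, ha, b, hb, hab⟩
  have hdegw : ∀ w ∈ S, 2 ≤ G.degree w := by
    intro w hw
    calc 2 ≤ (A ∩ G.neighborFinset w).card := h2 w hw
      _ ≤ (G.neighborFinset w).card := Finset.card_le_card Finset.inter_subset_right
      _ = G.degree w := rfl
  have hcardinter : ∀ (X : Finset (Fin n)) (y : Fin n),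
      (X ∩ G.neighborFinset y).card = ∑ x ∈ X, if G.Adj y x then 1 else 0 := by
    intro X y
    rw [← Finset.filter_mem_eq_inter, Finset.card_filter]
    exact Finset.sum_congr rfl fun x _ => by simp [SimpleGraph.mem_neighborFinset]
  have hdouble : ∑ w ∈ S, (A ∩ G.neighborFinset w).card
      = ∑ a ∈ A, (S ∩ G.neighborFinset a).card := by
    simp only [hcardinter]
    rw [Finset.sum_comm]
    exact Finset.sum_congr rfl fun a _ => Finset.sum_congr rfl fun w _ => by
      simp [SimpleGraph.adj_comm]
  have h1 : ∀ a ∈ A, (S ∩ G.neighborFinset a).card + 1 = G.degree a := by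
    intro a ha
    rw [hAdef, Finset.mem_sdiff, SimpleGraph.mem_neighborFinset, Finset.mem_singleton] at ha
    have hvna : v ∉ G.neighborFinset a := by
      rw [SimpleGraph.mem_neighborFinset]
      intro h
      exact G.irrefl ((hNv a h.symm) ▸ ha.1)
    have huna : u ∈ G.neighborFinset a := by
      rw [SimpleGraph.mem_neighborFinset]
      exact ha.1.symm
    have hSA : S ∩ G.neighborFinset a = G.neighborFinset a \ {u} := by
      rw [hSdef]
      ext x
      simp only [Finset.mem_inter, Finset.mem_sdiff, Finset.mem_univ, true_and,
        Finset.mem_insert, Finset.mem_singleton]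
      constructor
      · rintro ⟨hx1, hx2⟩
        exact ⟨hx2, fun h => hx1 (Or.inl h)⟩
      · rintro ⟨hx1, hx2⟩
        refine ⟨?_, hx1⟩
        rintro (rfl | rfl)
        · exact hx2 rfl
        · exact hvna hx1
    rw [hSA, Finset.card_sdiff_of_subset (Finset.singleton_subset_iff.mpr huna), Finset.card_singleton]
    have : 1 ≤ (G.neighborFinset a).card := Finset.card_pos.mpr ⟨u, huna⟩
    have hda : (G.neighborFinset a).card = G.degree a := rfl
    omega
  have hsumA : 2 * S.card + A.card ≤ ∑ a ∈ A, G.degree a := by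
    have e1 : ∑ a ∈ A, G.degree a = (∑ a ∈ A, (S ∩ G.neighborFinset a).card) + A.card := by
      calc ∑ a ∈ A, G.degree a = ∑ a ∈ A, ((S ∩ G.neighborFinset a).card + 1) :=
          (Finset.sum_congr rfl fun a ha => (h1 a ha).symm)
        _ = (∑ a ∈ A, (S ∩ G.neighborFinset a).card) + A.card := by
          rw [Finset.sum_add_distrib, Finset.sum_const, smul_eq_mul, mul_one]
    have e2 : 2 * S.card ≤ ∑ w ∈ S, (A ∩ G.neighborFinset w).card := by
      have h := Finset.sum_le_sum h2
      rwa [Finset.sum_const, smul_eq_mul, mul_comm] at h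
    omega
  have hsplit1 : (∑ x ∈ S, G.degree x) + (∑ x ∈ ({u, v} : Finset (Fin n)), G.degree x)
      = ∑ x, G.degree x := by
    rw [hSdef]
    exact Finset.sum_sdiff (Finset.subset_univ _)
  have hsum_uv : ∑ x ∈ ({u, v} : Finset (Fin n)), G.degree x = G.degree u + G.degree v :=
    Finset.sum_pair (Ne.symm hvu)
  have hsplit2 : (∑ x ∈ S \ A, G.degree x) + (∑ x ∈ A, G.degree x) = ∑ x ∈ S, G.degree x :=
    Finset.sum_sdiff hAS
  have hSArest : 2 * (S \ A).card ≤ ∑ x ∈ S \ A, G.degree x := by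
    have h := Finset.sum_le_sum (fun w hw => hdegw w ((Finset.sdiff_subset : S \ A ⊆ S) hw))
    rwa [Finset.sum_const, smul_eq_mul, mul_comm] at h
  have hSAcard : (S \ A).card = S.card - A.card := Finset.card_sdiff_of_subset hAS
  have hACle : A.card ≤ S.card := Finset.card_le_card hAS
  have htot : ∑ x, G.degree x = 2 * G.edgeFinset.card := G.sum_degrees_eq_twice_card_edges
  rw [hedge]
  omega
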